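/- Let X be a locally compact, σ-compact topological space, and for each i ∈ ℕ let f_i : [0,∞) → X be a proper continuous map. Then for each i one can choose a proper continuous map f'_i : [0,∞) → X, properly homotopic to f_i, such that the map f' : ℕ × [0,∞) → X defined by f'(i,x) = f'_i(x) is proper (where ℕ carries the discrete topology). -/

import Mathlib

open scoped NNReal

/-- A map is proper if it is continuous and preimages of compact sets are compact. -/
def ProperMap {A B : Type*} [TopologicalSpace A] [TopologicalSpace B] (f : A → B) : Prop :=
  Continuous f ∧ ∀ K : Set B, IsCompact K → IsCompact (f ⁻¹' K)

/-- Two maps are properly homotopic if there is a homotopy between them which is proper. -/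
def ProperlyHomotopic {A B : Type*} [TopologicalSpace A] [TopologicalSpace B]
    (f g : A → B) : Prop :=
  ∃ H : A × unitInterval → B, ProperMap H ∧ (∀ a, H (a, 0) = f a) ∧ (∀ a, H (a, 1) = g a)

/-- Inclusion of the unit interval into `ℝ≥0`. -/
noncomputable def sigmaInc (t : unitInterval) : ℝ≥0 := ⟨t.1, t.2.1⟩

lemma sigmaInc_continuous : Continuous sigmaInc :=
  Continuous.subtype_mk continuous_subtype_val _

@[simp] lemma sigmaInc_zero : sigmaInc 0 = 0 := rfl
@[simp] lemma sigmaInc_one : sigmaInc 1 = 1 := rfl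

lemma sigmaInc_le_one (t : unitInterval) : sigmaInc t ≤ 1 := t.2.2

/-- Preimage of a compact set under a shift in `ℝ≥0` is compact. -/
lemma shift_preimage_compact (c : ℝ≥0) {S : Set ℝ≥0} (hS : IsCompact S) :
    IsCompact ((fun x : ℝ≥0 => x + c) ⁻¹' S) := by
  obtain ⟨M, hM⟩ := hS.bddAbove
  refine IsCompact.of_isClosed_subset (isCompact_Icc (a := 0) (b := M))
    (hS.isClosed.preimage (by continuity)) ?_
  intro x hx
  exact ⟨zero_le, le_trans (le_add_right le_rfl) (hM hx)⟩

/-- Preimage of a compact set under the homotopy parameter map is compact. -/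
lemma homotopy_preimage_compact (c : ℝ≥0) {S : Set ℝ≥0} (hS : IsCompact S) :
    IsCompact ((fun p : ℝ≥0 × unitInterval => p.1 + sigmaInc p.2 * c) ⁻¹' S) := by
  obtain ⟨M, hM⟩ := hS.bddAbove
  have hcont : Continuous (fun p : ℝ≥0 × unitInterval => p.1 + sigmaInc p.2 * c) :=
    continuous_fst.add ((sigmaInc_continuous.comp continuous_snd).mul continuous_const)
  refine IsCompact.of_isClosed_subset ((isCompact_Icc (a := 0) (b := M)).prod isCompact_univ)
    (hS.isClosed.preimage hcont) ?_
  rintro ⟨x, t⟩ hx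
  exact ⟨⟨zero_le, le_trans (le_add_right le_rfl) (hM hx)⟩, trivial⟩

theorem stmt1 {X : Type*} [TopologicalSpace X] [LocallyCompactSpace X] [SigmaCompactSpace X]
    (f : ℕ → ℝ≥0 → X) (hf : ∀ i, ProperMap (f i)) :
    ∃ f' : ℕ → ℝ≥0 → X,
      (∀ i, ProperMap (f' i) ∧ ProperlyHomotopic (f i) (f' i)) ∧
      ProperMap (fun p : ℕ × ℝ≥0 => f' p.1 p.2) := by
  classical
  set W : CompactExhaustion X := CompactExhaustion.choice X with hW
  choose M hM using fun i => ((hf i).2 _ (W.isCompact i)).bddAbove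
  set c : ℕ → ℝ≥0 := fun i => M i + 1 with hc
  set f' : ℕ → ℝ≥0 → X := fun i x => f i (x + c i) with hf'
  -- each f' i misses W i
  have hmiss : ∀ i x, f' i x ∉ W i := by
    intro i x hx
    have : x + c i ≤ M i := hM i hx
    have h2 : M i + 1 ≤ x + c i := le_trans (le_add_left le_rfl) le_rfl
    have := le_trans h2 this
    simp at this
  have hproper : ∀ i, ProperMap (f' i) := by
    intro i
    refine ⟨(hf i).1.comp (by continuity), ?_⟩
    intro K hK
    have : f' i ⁻¹' K = (fun x : ℝ≥0 => x + c i) ⁻¹' (f i ⁻¹' K) := rfl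
    rw [this]
    exact shift_preimage_compact _ ((hf i).2 K hK)
  refine ⟨f', fun i => ⟨hproper i, ?_⟩, ?_, ?_⟩
  · -- proper homotopy
    refine ⟨fun p => f i (p.1 + sigmaInc p.2 * c i), ⟨?_, ?_⟩, ?_, ?_⟩
    · exact (hf i).1.comp
        (continuous_fst.add ((sigmaInc_continuous.comp continuous_snd).mul continuous_const))
    · intro K hK
      exact homotopy_preimage_compact (c i) ((hf i).2 K hK)
    · intro a; simp
    · intro a; simp [hf']
  · -- continuity of assembled map
    rw [continuous_iff_continuousAt]
    rintro ⟨i, x⟩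
    have h1 : ContinuousAt (fun p : ℕ × ℝ≥0 => f' i p.2) (i, x) :=
      ((hproper i).1.comp continuous_snd).continuousAt
    refine h1.congr ?_
    have hopen : IsOpen {p : ℕ × ℝ≥0 | p.1 = i} :=
      (isOpen_discrete ({i} : Set ℕ)).preimage continuous_fst
    filter_upwards [hopen.mem_nhds (by simp)] with p hp
    rw [hp]
  · -- compact preimages of assembled map
    intro K hK
    obtain ⟨n, hn⟩ := W.exists_superset_of_isCompact hK
    have heq : (fun p : ℕ × ℝ≥0 => f' p.1 p.2) ⁻¹' K =
        ⋃ i ∈ Finset.range n, ({i} : Set ℕ) ×ˢ (f' i ⁻¹' K) := by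
      ext ⟨j, x⟩
      simp only [Set.mem_preimage, Set.mem_iUnion, Set.mem_prod, Set.mem_singleton_iff,
        Finset.mem_range]
      constructor
      · intro hj
        refine ⟨j, ?_, rfl, hj⟩
        by_contra h
        push_neg at h
        exact hmiss j x (W.subset h (hn hj))
      · rintro ⟨i, -, rfl, h⟩
        exact h
    rw [heq]
    exact (Finset.range n).finite_toSet.isCompact_biUnion
      (fun i _ => isCompact_singleton.prod ((hproper i).2 K hK))
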